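/- Let $t \ge 0$ and $k \ge 2$ be integers and let $H = K_{t+1} \vee ((t+2) K_k)$. Then $\delta(H) = k + t$ and $I'(H) = k + \frac{k-1}{t+1}$. -/

import Mathlib

open SimpleGraph

noncomputable def isoCount {V : Type*} (G : SimpleGraph V) (S : Set V) : ℕ :=
  {v | v ∉ S ∧ ∀ w, G.Adj v w → w ∈ S}.ncard

noncomputable def isoTough {V : Type*} [Fintype V] (G : SimpleGraph V) : ℝ :=
  sInf {x : ℝ | ∃ S : Set V, 2 ≤ isoCount G S ∧ x = (S.ncard : ℝ) / (isoCount G S : ℝ)}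

noncomputable def isoToughVar {V : Type*} [Fintype V] (G : SimpleGraph V) : ℝ :=
  sInf {x : ℝ | ∃ S : Set V, 2 ≤ isoCount G S ∧ x = (S.ncard : ℝ) / ((isoCount G S : ℝ) - 1)}

/-- The join `K_c ∨ (d K_1)`. -/
def joinKE (c d : ℕ) : SimpleGraph (Fin c ⊕ Fin d) where
  Adj x y := x ≠ y ∧ (x.isLeft ∨ y.isLeft)
  symm := by constructor; intro x y h; tauto
  loopless := by constructor; intro x h; exact h.1 rfl

/-- The star `K_{1,n-1}`: join of one center with `n-1` leaves. -/
def starGraph (n : ℕ) : SimpleGraph (Fin 1 ⊕ Fin (n-1)) := joinKE 1 (n-1)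

/-- The graph `G_l = K_{l-1} ∨ (l K_k)`. -/
def Gl (k l : ℕ) : SimpleGraph (Fin (l-1) ⊕ Fin l × Fin k) where
  Adj x y := x ≠ y ∧ (x.isLeft ∨ y.isLeft ∨
    ∃ i p q, x = Sum.inr (i, p) ∧ y = Sum.inr (i, q))
  symm := by
    constructor
    rintro x y ⟨h1, h2⟩
    refine ⟨h1.symm, ?_⟩
    rcases h2 with h | h | ⟨i, p, q, hx, hy⟩
    · tauto
    · tauto
    · exact Or.inr (Or.inr ⟨i, q, p, hy, hx⟩)
  loopless := ⟨fun x h => h.1 rfl⟩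

noncomputable instance GlDec (k l : ℕ) : DecidableRel (Gl k l).Adj := Classical.decRel _




variable {k l : ℕ}

lemma adj_inl (a : Fin (l-1)) (y) : (Gl k l).Adj (Sum.inl a) y ↔ Sum.inl a ≠ y := by
  simp [Gl]

lemma adj_inr_inl (i : Fin l) (p : Fin k) (a : Fin (l-1)) :
    (Gl k l).Adj (Sum.inr (i,p)) (Sum.inl a) := by
  simp [Gl]

lemma adj_inr_inr (i j : Fin l) (p q : Fin k) :
    (Gl k l).Adj (Sum.inr (i,p)) (Sum.inr (j,q)) ↔ i = j ∧ p ≠ q := by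
  constructor
  · rintro ⟨h1, h2⟩
    rcases h2 with h | h | ⟨i', p', q', hx, hy⟩
    · simp at h
    · simp at h
    · simp_all
  · rintro ⟨rfl, h⟩
    exact ⟨by simp [h], Or.inr (Or.inr ⟨i, p, q, rfl, rfl⟩)⟩

lemma nf_inr (i : Fin l) (p : Fin k) :
    (Gl k l).neighborFinset (Sum.inr (i,p)) =
      (Finset.univ.image (Sum.inl : Fin (l-1) → _)) ∪
      ((Finset.univ.filter (· ≠ p)).image (fun q => Sum.inr (i,q))) := by
  ext w
  rcases w with a | ⟨j, q⟩
  · simp [adj_inr_inl]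
  · simp only [SimpleGraph.mem_neighborFinset, adj_inr_inr, Finset.mem_union, Finset.mem_image,
      Finset.mem_filter, Finset.mem_univ, true_and]
    constructor
    · rintro ⟨rfl, h⟩; exact Or.inr ⟨q, Ne.symm h, rfl⟩
    · rintro (⟨a, ha⟩ | ⟨b, hb, he⟩)
      · simp at ha
      · obtain ⟨rfl, rfl⟩ : i = j ∧ b = q := by simpa [Prod.ext_iff] using he
        exact ⟨rfl, Ne.symm hb⟩

lemma degree_inr (i : Fin l) (p : Fin k) :
    (Gl k l).degree (Sum.inr (i,p)) = (l - 1) + (k - 1) := by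
  rw [SimpleGraph.degree, nf_inr, Finset.card_union_of_disjoint]
  · rw [Finset.card_image_of_injective _ Sum.inl_injective,
      Finset.card_image_of_injective _ (fun a b h => by simpa using h)]
    simp [Finset.filter_ne']
  · simp [Finset.disjoint_left]

lemma degree_inl (a : Fin (l-1)) :
    (Gl k l).degree (Sum.inl a) = (l - 1) + l * k - 1 := by
  have : (Gl k l).neighborFinset (Sum.inl a) = Finset.univ \ {Sum.inl a} := by
    ext w; simp [adj_inl, eq_comm]
  rw [SimpleGraph.degree, this]
  simp [Finset.card_sdiff]

lemma minDeg (k t : ℕ) (hk : 2 ≤ k) : (Gl k (t+2)).minDegree = k + t := by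
  apply le_antisymm
  · have := (Gl k (t+2)).minDegree_le_degree (Sum.inr (0, ⟨0, by omega⟩))
    rw [degree_inr] at this
    omega
  · haveI : Nonempty (Fin (t + 2 - 1) ⊕ Fin (t + 2) × Fin k) := ⟨Sum.inl ⟨0, by omega⟩⟩
    apply SimpleGraph.le_minDegree_of_forall_le_degree
    rintro (a | ⟨i, p⟩)
    · rw [degree_inl]
      have h2 : (t+2)*k = t*k+2*k := by ring
      omega
    · rw [degree_inr]; omega

section IsoLemmas
variable {k t : ℕ}

abbrev VG (k t : ℕ) := Fin (t+2-1) ⊕ Fin (t+2) × Fin k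

def IsoSet (G : SimpleGraph (VG k t)) (S : Set (VG k t)) : Set (VG k t) :=
  {v | v ∉ S ∧ ∀ w, G.Adj v w → w ∈ S}

lemma isoCount_eq (G : SimpleGraph (VG k t)) (S : Set (VG k t)) :
    isoCount G S = (IsoSet G S).ncard := rfl

-- all iso vertices are right vertices when there are ≥ 2 of them
lemma iso_right {S : Set (VG k t)} (hm : 2 ≤ isoCount (Gl k (t+2)) S)
    {v : VG k t} (hv : v ∈ IsoSet (Gl k (t+2)) S) : ∃ i p, v = Sum.inr (i, p) := by
  rcases v with a | ⟨i, p⟩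
  · exfalso
    have hsub : IsoSet (Gl k (t+2)) S ⊆ {Sum.inl a} := by
      intro u hu
      by_contra hne
      simp only [Set.mem_singleton_iff] at hne
      exact hu.1 (hv.2 u ((adj_inl a u).mpr (Ne.symm hne)))
    have := Set.ncard_le_ncard hsub (Set.finite_singleton _)
    rw [Set.ncard_singleton] at this
    rw [isoCount_eq] at hm; omega
  · exact ⟨i, p, rfl⟩

-- at most one iso vertex per clique
lemma iso_unique {S : Set (VG k t)} {i : Fin (t+2)} {p q : Fin k}
    (hp : Sum.inr (i, p) ∈ IsoSet (Gl k (t+2)) S)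
    (hq : Sum.inr (i, q) ∈ IsoSet (Gl k (t+2)) S) : p = q := by
  by_contra hne
  exact hq.1 (hp.2 _ ((adj_inr_inr i i p q).mpr ⟨rfl, hne⟩))

end IsoLemmas

section Counting
variable {k t : ℕ}

open Finset in
lemma iso_count_bounds {S : Set (VG k t)} (hk : 2 ≤ k)
    (hm : 2 ≤ isoCount (Gl k (t+2)) S) :
    isoCount (Gl k (t+2)) S ≤ t + 2 ∧
    (t + 1) + isoCount (Gl k (t+2)) S * (k-1) ≤ S.ncard := by
  classical
  set G := Gl k (t+2)
  set I := IsoSet G S with hI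
  -- finset versions
  set If : Finset (VG k t) := univ.filter (· ∈ I) with hIf
  set Jf : Finset (Fin (t+2)) := univ.filter (fun i => ∃ p, Sum.inr (i,p) ∈ I) with hJf
  have hIcard : isoCount G S = If.card := by
    rw [isoCount_eq]
    rw [Set.ncard_eq_toFinset_card']
    congr 1
    ext v; simp [hIf, hI]
  -- bijection between If and Jf
  have hbij : If.card = Jf.card := by
    apply Finset.card_bij (fun v _ => match v with
      | Sum.inl a => 0
      | Sum.inr (i, p) => i)
    · rintro v hv
      simp only [hIf, mem_filter, mem_univ, true_and] at hv
      obtain ⟨i, p, rfl⟩ := iso_right hm hv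
      simp only [hJf, mem_filter, mem_univ, true_and]
      exact ⟨p, hv⟩
    · rintro v hv w hw hvw
      simp only [hIf, mem_filter, mem_univ, true_and] at hv hw
      obtain ⟨i, p, rfl⟩ := iso_right hm hv
      obtain ⟨j, q, rfl⟩ := iso_right hm hw
      simp only at hvw
      subst hvw
      rw [iso_unique hv hw]
    · rintro i hi
      simp only [hJf, mem_filter, mem_univ, true_and] at hi
      obtain ⟨p, hp⟩ := hi
      exact ⟨Sum.inr (i,p), by simp [hIf, hp], rfl⟩
  constructor
  · rw [hIcard, hbij]
    calc Jf.card ≤ (univ : Finset (Fin (t+2))).card := Finset.card_le_card (subset_univ _)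
    _ = t + 2 := by simp
  · -- S contains T
    set Tf : Finset (VG k t) := (univ.image Sum.inl) ∪
      Jf.biUnion (fun i => (univ.filter (fun q => Sum.inr (i,q) ∉ I)).image
        (fun q => (Sum.inr (i,q) : VG k t))) with hTf
    have hIne : I.Nonempty := by
      rw [hI]
      apply Set.nonempty_of_ncard_ne_zero
      rw [← isoCount_eq]
      omega
    obtain ⟨v0, hv0⟩ := hIne
    obtain ⟨i0, p0, rfl⟩ := iso_right hm hv0
    have hTS : ∀ x ∈ Tf, x ∈ S := by
      intro x hx
      simp only [hTf, mem_union, mem_image, mem_biUnion, mem_filter, mem_univ, true_and] at hx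
      rcases hx with ⟨a, rfl⟩ | ⟨i, hi, q, hq, rfl⟩
      · exact hv0.2 _ (adj_inr_inl i0 p0 a)
      · simp only [hJf, mem_filter, mem_univ, true_and] at hi
        obtain ⟨p, hp⟩ := hi
        have hqp : q ≠ p := fun h => hq (h ▸ hp)
        exact hp.2 _ ((adj_inr_inr i i p q).mpr ⟨rfl, Ne.symm hqp⟩)
    have hScard : Tf.card ≤ S.ncard := by
      rw [Set.ncard_eq_toFinset_card']
      apply Finset.card_le_card
      intro x hx
      simp only [Set.mem_toFinset]
      exact hTS x hx
    refine le_trans ?_ hScard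
    rw [hTf, Finset.card_union_of_disjoint, Finset.card_biUnion]
    · have h1 : (univ.image (Sum.inl : Fin (t+2-1) → VG k t)).card = t + 1 := by
        rw [Finset.card_image_of_injective _ Sum.inl_injective]
        simp only [Finset.card_univ, Fintype.card_fin]
        omega
      have h2 : ∀ i ∈ Jf,
          ((univ.filter (fun q => Sum.inr (i,q) ∉ I)).image
            (fun q => (Sum.inr (i,q) : VG k t))).card = k - 1 := by
        intro i hi
        simp only [hJf, mem_filter, mem_univ, true_and] at hi
        obtain ⟨p, hp⟩ := hi
        rw [Finset.card_image_of_injective _ (fun a b h => by simpa using h)]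
        have : (univ.filter (fun q => Sum.inr (i,q) ∉ I)) = univ \ {p} := by
          ext q
          simp only [mem_filter, mem_univ, true_and, mem_sdiff, mem_singleton]
          constructor
          · intro h hqp; exact h (hqp ▸ hp)
          · intro hqp hmem; exact hqp (iso_unique hmem hp)
        rw [this, Finset.card_sdiff_of_subset (by simp)]
        simp only [Finset.card_univ, Fintype.card_fin, Finset.card_singleton]
      rw [Finset.sum_congr rfl h2, Finset.sum_const, smul_eq_mul, h1]
      have he : (IsoSet G S).ncard = Jf.card := by
        rw [← isoCount_eq, hIcard, hbij]
      rw [isoCount_eq, he]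
    · -- pairwise disjoint biUnion
      intro i _ j _ hij
      simp only [Finset.disjoint_left, mem_image, mem_filter, mem_univ, true_and]
      rintro x ⟨q, hq, rfl⟩ ⟨q', hq', he⟩
      obtain ⟨rfl, rfl⟩ : j = i ∧ q' = q := by simpa [Prod.ext_iff] using he
      exact hij rfl
    · simp [Finset.disjoint_left]
  
end Counting

section Witness
variable {k t : ℕ}

open Finset in
lemma witness_props (hk : 2 ≤ k) :
    ∃ S : Set (VG k t), isoCount (Gl k (t+2)) S = t + 2 ∧
      S.ncard = (t + 1) + (t + 2) * (k - 1) := by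
  classical
  have hk0 : 0 < k := by omega
  set p0 : Fin k := ⟨0, hk0⟩ with hp0
  set S : Set (VG k t) :=
    {x | (∃ a, x = Sum.inl a) ∨ ∃ i q, q ≠ p0 ∧ x = Sum.inr (i,q)} with hS
  refine ⟨S, ?_, ?_⟩
  · have hiso : IsoSet (Gl k (t+2)) S = Set.range (fun i => (Sum.inr (i, p0) : VG k t)) := by
      ext v
      constructor
      · rintro ⟨hv1, hv2⟩
        rcases v with a | ⟨i, q⟩
        · exact absurd (Or.inl ⟨a, rfl⟩) hv1
        · have hq : q = p0 := by
            by_contra hq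
            exact hv1 (Or.inr ⟨i, q, hq, rfl⟩)
          exact ⟨i, by rw [hq]⟩
      · rintro ⟨i, rfl⟩
        refine ⟨?_, ?_⟩
        · rintro (⟨a, ha⟩ | ⟨j, q, hq, he⟩)
          · simp at ha
          · obtain ⟨rfl, rfl⟩ : j = i ∧ q = p0 := by simpa [Prod.ext_iff] using he.symm
            exact hq rfl
        · rintro (a | ⟨j, q⟩) hadj
          · exact Or.inl ⟨a, rfl⟩
          · rw [adj_inr_inr] at hadj
            exact Or.inr ⟨j, q, hadj.2.symm, rfl⟩
    rw [isoCount_eq, hiso]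
    have : Set.range (fun i => (Sum.inr (i, p0) : VG k t)) =
        ↑(Finset.univ.image (fun i => (Sum.inr (i, p0) : VG k t))) := by
      simp
    rw [this, Set.ncard_coe_finset,
      Finset.card_image_of_injective _ (fun a b h => by simpa [Prod.ext_iff] using h)]
    simp
  · have : S = ↑((Finset.univ.image (Sum.inl : Fin (t+2-1) → VG k t)) ∪
        ((Finset.univ.filter (fun x : Fin (t+2) × Fin k => x.2 ≠ p0)).image Sum.inr)) := by
      ext x
      simp only [hS, Set.mem_setOf_eq, coe_union, Set.mem_union, coe_image, coe_filter,
        Set.mem_image, Set.mem_setOf_eq, mem_coe, mem_univ, true_and, mem_image,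
        Set.mem_image, Finset.mem_filter]
      constructor
      · rintro (⟨a, rfl⟩ | ⟨i, q, hq, rfl⟩)
        · exact Or.inl ⟨a, rfl⟩
        · exact Or.inr ⟨⟨i, q⟩, hq, rfl⟩
      · rintro (⟨a, rfl⟩ | ⟨⟨i, q⟩, hq, rfl⟩)
        · exact Or.inl ⟨a, rfl⟩
        · exact Or.inr ⟨i, q, hq, rfl⟩
    rw [this, Set.ncard_coe_finset, Finset.card_union_of_disjoint (by simp [Finset.disjoint_left]),
      Finset.card_image_of_injective _ Sum.inl_injective,
      Finset.card_image_of_injective _ Sum.inr_injective]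
    have hfil : (Finset.univ.filter (fun x : Fin (t+2) × Fin k => x.2 ≠ p0)) =
        Finset.univ ×ˢ ({p0}ᶜ : Finset (Fin k)) := by
      ext ⟨i, q⟩; simp
    rw [hfil, Finset.card_product, Finset.card_compl]
    simp only [Finset.card_univ, Fintype.card_fin, Finset.card_singleton]
    omega

end Witness

theorem counterexample_params (k t : ℕ) (hk : 2 ≤ k) :
    (Gl k (t + 2)).minDegree = k + t ∧
    isoToughVar (Gl k (t + 2)) = (k : ℝ) + ((k : ℝ) - 1) / ((t : ℝ) + 1) := by
  refine ⟨minDeg k t hk, ?_⟩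
  have ht1 : (0:ℝ) < (t:ℝ) + 1 := by positivity
  set c : ℝ := (k : ℝ) + ((k : ℝ) - 1) / ((t : ℝ) + 1) with hc
  obtain ⟨S0, hS0i, hS0c⟩ := witness_props (t := t) hk
  have hkc : ((k - 1 : ℕ) : ℝ) = (k : ℝ) - 1 := by
    have h1 : 1 ≤ k := by omega
    push_cast [h1]
    ring
  have hval : ((S0.ncard : ℝ)) / ((isoCount (Gl k (t+2)) S0 : ℝ) - 1) = c := by
    rw [hS0i, hS0c, hc]
    push_cast [hkc]
    have h21 : ((t:ℝ)+2) - 1 = (t:ℝ)+1 := by ring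
    rw [h21, div_eq_iff (ne_of_gt ht1)]
    field_simp
    ring
  have hmem : c ∈ {x : ℝ | ∃ S : Set (VG k t), 2 ≤ isoCount (Gl k (t+2)) S ∧
      x = (S.ncard : ℝ) / ((isoCount (Gl k (t+2)) S : ℝ) - 1)} :=
    ⟨S0, by rw [hS0i]; omega, hval.symm⟩
  have hlb : ∀ x ∈ {x : ℝ | ∃ S : Set (VG k t), 2 ≤ isoCount (Gl k (t+2)) S ∧
      x = (S.ncard : ℝ) / ((isoCount (Gl k (t+2)) S : ℝ) - 1)}, c ≤ x := by
    rintro x ⟨S, hm, rfl⟩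
    obtain ⟨h1, h2⟩ := iso_count_bounds hk hm
    set m := isoCount (Gl k (t+2)) S with hmdef
    have hm1 : (1:ℝ) < (m:ℝ) := by exact_mod_cast hm
    have hn : ((t:ℝ)+1) + (m:ℝ)*((k:ℝ)-1) ≤ (S.ncard : ℝ) := by
      have h2' : ((t + 1 + m * (k-1) : ℕ) : ℝ) ≤ ((S.ncard : ℕ) : ℝ) := by exact_mod_cast h2
      push_cast [hkc] at h2'
      linarith
    have hmle : (m:ℝ) ≤ (t:ℝ)+2 := by exact_mod_cast h1
    rw [le_div_iff₀ (by linarith : (0:ℝ) < (m:ℝ)-1), hc]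
    have heq : (k:ℝ) + ((k:ℝ)-1)/((t:ℝ)+1) = ((k:ℝ)*((t:ℝ)+1) + ((k:ℝ)-1))/((t:ℝ)+1) := by
      field_simp
    rw [heq, div_mul_eq_mul_div, div_le_iff₀ ht1]
    nlinarith [mul_nonneg (show (0:ℝ) ≤ (t:ℝ)+(k:ℝ)-1 by
        have : (2:ℝ) ≤ (k:ℝ) := by exact_mod_cast hk
        linarith)
      (show (0:ℝ) ≤ (t:ℝ)+2-(m:ℝ) by linarith)]
  rw [isoToughVar]
  exact le_antisymm (csInf_le ⟨c, fun x hx => hlb x hx⟩ hmem) (le_csInf ⟨c, hmem⟩ hlb)
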